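/- arXiv:1512.06817 — 2 statements merged into one kernel-verified Lean document; each statement's English description precedes it below -/
import Mathlib

section
/- Let W : ℕ → A be an infinite word over a finite alphabet A. The following are equivalent: (1) W is recurrent, i.e., every factor of W has infinitely many occurrences; (2) for any two factors u, v of W of the same length, there exists a factor of W having u as a prefix and v as a suffix; (3) every factor of W has at least two occurrences; (4) every factor u of W is left-extendable, i.e., there exists a letter x ∈ A such that xu is a factor of W. -/
/-- The factor of the infinite word `W` of length `n` occurring at position `i`. -/
def factorAt {A : Type*} (W : ℕ → A) (i n : ℕ) : List A :=
  (List.range n).map (fun j => W (i + j))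

/-- `u` occurs in `W` at position `i`. -/
def occursAt {A : Type*} (W : ℕ → A) (u : List A) (i : ℕ) : Prop :=
  u = factorAt W i u.length

/-- `u` is a factor of the infinite word `W`. -/
def IsFactor {A : Type*} (W : ℕ → A) (u : List A) : Prop :=
  ∃ i : ℕ, occursAt W u i

lemma factorAt_length {A : Type*} (W : ℕ → A) (i n : ℕ) : (factorAt W i n).length = n := by
  simp [factorAt]

lemma factorAt_add {A : Type*} (W : ℕ → A) (i n k : ℕ) :
    factorAt W i (n + k) = factorAt W i n ++ factorAt W (i + n) k := by
  simp [factorAt, List.range_add, Function.comp, add_assoc]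

lemma occursAt_factorAt {A : Type*} (W : ℕ → A) (i n : ℕ) : occursAt W (factorAt W i n) i := by
  simp [occursAt, factorAt_length]

lemma occursAt_append {A : Type*} {W : ℕ → A} {a b : List A} {j : ℕ}
    (h : occursAt W (a ++ b) j) : occursAt W a j ∧ occursAt W b (j + a.length) := by
  have h' : a ++ b = factorAt W j a.length ++ factorAt W (j + a.length) b.length := by
    have h2 : a ++ b = factorAt W j (a.length + b.length) := by
      have := h; unfold occursAt at this; rwa [List.length_append] at this
    rw [h2, factorAt_add]
  exact List.append_inj h' (by rw [factorAt_length])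

lemma factorAt_one {A : Type*} (W : ℕ → A) (j : ℕ) : factorAt W j 1 = [W j] := by
  simp [factorAt, show List.range 1 = [0] from rfl]

/-- For an infinite word `W` over a finite alphabet the following are equivalent:
(1) `W` is recurrent (every factor occurs infinitely often);
(2) for any two factors `u, v` of the same length there is a factor with prefix `u`
    and suffix `v`;
(3) every factor occurs at least twice;
(4) every factor is left-extendable. -/
theorem stmt4 {A : Type*} [Fintype A] (W : ℕ → A) :
    List.TFAE
      [∀ u : List A, IsFactor W u → {i : ℕ | occursAt W u i}.Infinite,
       ∀ u v : List A, IsFactor W u → IsFactor W v → u.length = v.length →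
         ∃ w : List A, IsFactor W w ∧ u <+: w ∧ v <:+ w,
       ∀ u : List A, IsFactor W u → ∃ i j : ℕ, i ≠ j ∧ occursAt W u i ∧ occursAt W u j,
       ∀ u : List A, IsFactor W u → ∃ x : A, IsFactor W (x :: u)] := by
  tfae_have 1 → 2
  · intro h1 u v hu hv hlen
    obtain ⟨i, hi⟩ := hu
    have hu' : u = factorAt W i u.length := hi
    obtain ⟨j, hj, hij⟩ : ∃ j, occursAt W v j ∧ i ≤ j := by
      by_contra hc
      push_neg at hc
      exact (h1 v hv) ((Set.finite_Iio i).subset (fun x hx => hc x hx))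
    have hv' : v = factorAt W j v.length := hj
    refine ⟨factorAt W i ((j - i) + v.length), ⟨i, occursAt_factorAt ..⟩, ?_, ?_⟩
    · have he : (j - i) + v.length = u.length + (j - i) := by omega
      rw [he, factorAt_add, ← hu']
      exact List.prefix_append _ _
    · rw [factorAt_add, show i + (j - i) = j from by omega, ← hv']
      exact List.suffix_append _ _
  tfae_have 2 → 3
  · intro h2 u hu
    obtain ⟨i, hi⟩ := hu
    have hu' : u = factorAt W i u.length := hi
    set n := u.length with hn
    set m := i + n with hm
    obtain ⟨w, hw, hpre, hsuf⟩ := h2 (factorAt W 1 m) (factorAt W 0 m)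
      ⟨1, occursAt_factorAt ..⟩ ⟨0, occursAt_factorAt ..⟩ (by rw [factorAt_length, factorAt_length])
    obtain ⟨jw, hjw⟩ := hw
    obtain ⟨a, ha⟩ := hsuf
    have hpo : occursAt W (factorAt W 0 m) (jw + a.length) :=
      (occursAt_append (by rw [ha]; exact hjw)).2
    have hdecomp : factorAt W 0 m = factorAt W 0 i ++ u := by
      rw [hm, factorAt_add, Nat.zero_add, ← hu']
    by_cases hz : jw + a.length = 0
    · -- then w = p and q = p, so p occurs at 1, hence u occurs at 1 + i
      have ha0 : a = [] := List.length_eq_zero_iff.mp (by omega)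
      have hwp : w = factorAt W 0 m := by rw [← ha, ha0, List.nil_append]
      have hq : factorAt W 1 m = w :=
        hpre.eq_of_length (by rw [factorAt_length, hwp, factorAt_length])
      have hp1 : occursAt W (factorAt W 0 m) 1 := by
        rw [← hwp, ← hq]; exact occursAt_factorAt ..
      have h2' := (occursAt_append (by rw [← hdecomp]; exact hp1)).2
      rw [factorAt_length] at h2'
      exact ⟨i, 1 + i, by omega, hi, h2'⟩
    · have h2' : occursAt W u (jw + a.length + (factorAt W 0 i).length) :=
        (occursAt_append (by rw [← hdecomp]; exact hpo)).2
      rw [factorAt_length] at h2'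
      exact ⟨i, jw + a.length + i, by omega, hi, h2'⟩
  tfae_have 3 → 4
  · intro h3 u hu
    obtain ⟨i, j, hij, hi, hj⟩ := h3 u hu
    obtain ⟨k, hk0, hk⟩ : ∃ k, 0 < k ∧ occursAt W u k := by
      rcases Nat.eq_zero_or_pos i with h | h
      · exact ⟨j, by omega, hj⟩
      · exact ⟨i, h, hi⟩
    have hk' : u = factorAt W k u.length := hk
    refine ⟨W (k - 1), k - 1, ?_⟩
    show W (k - 1) :: u = factorAt W (k - 1) (W (k - 1) :: u).length
    calc W (k - 1) :: u = [W (k - 1)] ++ u := rfl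
      _ = factorAt W (k - 1) 1 ++ factorAt W ((k - 1) + 1) u.length := by
          rw [factorAt_one, show (k - 1) + 1 = k from by omega, ← hk']
      _ = factorAt W (k - 1) (1 + u.length) := (factorAt_add ..).symm
      _ = factorAt W (k - 1) (W (k - 1) :: u).length := by
          rw [List.length_cons, Nat.add_comm]
  tfae_have 4 → 1
  · intro h4 u hu
    have key : ∀ k, ∀ u : List A, IsFactor W u → ∃ j, k ≤ j ∧ occursAt W u j := by
      intro k
      induction k with
      | zero => intro u hu; obtain ⟨i, hi⟩ := hu; exact ⟨i, Nat.zero_le _, hi⟩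
      | succ k ih =>
        intro u hu
        obtain ⟨x, hx⟩ := h4 u hu
        obtain ⟨j, hj, hocc⟩ := ih (x :: u) hx
        have : occursAt W u (j + 1) := by
          have := (occursAt_append (a := [x]) (b := u) (j := j) hocc).2
          simpa using this
        exact ⟨j + 1, by omega, this⟩
    refine Set.infinite_of_not_bddAbove ?_
    rintro ⟨b, hb⟩
    obtain ⟨j, hj, hocc⟩ := key (b + 1) u hu
    exact absurd (hb hocc) (by omega)
  tfae_finish
end

section
/- Let W : ℕ → A be a recurrent infinite word over a finite alphabet A such that for some natural number N and constant K one has T_W(n) = n + K for all n ≥ N. Then there exists k such that every factor v of W with |v| ≥ k has exactly two distinct return words. -/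
/-- `W` is recurrent: every factor occurs infinitely often. -/
def Recurrent {A : Type*} (W : ℕ → A) : Prop :=
  ∀ u : List A, IsFactor W u → {i : ℕ | occursAt W u i}.Infinite

/-- The complexity function: the number of distinct factors of `W` of length `n`. -/
noncomputable def complexity {A : Type*} (W : ℕ → A) (n : ℕ) : ℕ :=
  Set.ncard {u : List A | u.length = n ∧ IsFactor W u}

/-- `u` is a return word of the factor `v` of `W`: `u` is the word read between
two consecutive occurrences of `v` in `W`. -/
def IsReturnWord {A : Type*} (W : ℕ → A) (v u : List A) : Prop :=
  ∃ i j : ℕ, i < j ∧ occursAt W v i ∧ occursAt W v j ∧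
    (∀ m : ℕ, i < m → m < j → ¬ occursAt W v m) ∧
    u = factorAt W i (j - i)

section Aux
open Classical
variable {A : Type*} {W : ℕ → A}


@[simp] lemma length_factorAt (W : ℕ → A) (i n : ℕ) : (factorAt W i n).length = n := by
  simp [factorAt]

lemma getElem?_factorAt (W : ℕ → A) (i n t : ℕ) :
    (factorAt W i n)[t]? = if t < n then some (W (i + t)) else none := by
  by_cases ht : t < n
  · simp [factorAt, List.getElem?_map, List.getElem?_range ht, ht]
  · simp [factorAt, ht, List.getElem?_eq_none]

lemma factorAt_ext {i n i' n' : ℕ} (hn : n = n')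
    (hw : ∀ t, t < n → W (i + t) = W (i' + t)) : factorAt W i n = factorAt W i' n' := by
  subst hn
  apply List.ext_getElem?
  intro t
  rw [getElem?_factorAt, getElem?_factorAt]
  by_cases ht : t < n
  · simp [ht, hw t ht]
  · simp [ht]

lemma take_factorAt {m n : ℕ} (h : m ≤ n) (W : ℕ → A) (i : ℕ) :
    (factorAt W i n).take m = factorAt W i m := by
  apply List.ext_getElem?
  intro t
  rw [List.getElem?_take, getElem?_factorAt, getElem?_factorAt]
  split_ifs <;> first | rfl | omega

lemma drop_factorAt (m : ℕ) {n : ℕ} (W : ℕ → A) (i : ℕ) :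
    (factorAt W i n).drop m = factorAt W (i + m) (n - m) := by
  apply List.ext_getElem?
  intro t
  rw [List.getElem?_drop, getElem?_factorAt, getElem?_factorAt]
  split_ifs with h1 h2 h2
  · rw [Nat.add_assoc, Nat.add_comm m t]
  · omega
  · omega
  · rfl

lemma factorAt_succ (W : ℕ → A) (i n : ℕ) :
    factorAt W i (n + 1) = factorAt W i n ++ [W (i + n)] := by
  simp [factorAt, List.range_succ]

lemma isFactor_factorAt (W : ℕ → A) (i n : ℕ) : IsFactor W (factorAt W i n) :=
  ⟨i, by simp [occursAt]⟩

lemma IsFactor.take {u : List A} (h : IsFactor W u) (m : ℕ) : IsFactor W (u.take m) := by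
  obtain ⟨i, hi⟩ := h
  rw [hi]
  by_cases hm : m ≤ u.length
  · rw [take_factorAt hm]; exact isFactor_factorAt W i m
  · rw [List.take_of_length_le (by simp; omega)]; exact isFactor_factorAt W i u.length

lemma IsFactor.drop {u : List A} (h : IsFactor W u) (m : ℕ) : IsFactor W (u.drop m) := by
  obtain ⟨i, hi⟩ := h
  rw [hi, drop_factorAt]
  exact isFactor_factorAt W (i + m) _


lemma factorAt_append (W : ℕ → A) (i a b : ℕ) :
    factorAt W i (a + b) = factorAt W i a ++ factorAt W (i + a) b := by
  induction b with
  | zero => simp [factorAt]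
  | succ b ih =>
    rw [show a + (b + 1) = (a + b) + 1 from rfl, factorAt_succ, ih, factorAt_succ,
      List.append_assoc, show i + (a + b) = i + a + b from by omega]


variable [Fintype A]

noncomputable def Ffin (W : ℕ → A) (m : ℕ) : Finset (List A) :=
  Set.Finite.toFinset (s := {u : List A | u.length = m ∧ IsFactor W u})
    (Set.Finite.subset (List.finite_length_eq A m) (fun u hu => hu.1))

lemma mem_Ffin {m : ℕ} {u : List A} : u ∈ Ffin W m ↔ u.length = m ∧ IsFactor W u := by
  simp [Ffin]

lemma card_Ffin (m : ℕ) : (Ffin W m).card = complexity W m := by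
  rw [complexity, Ffin, Set.ncard_eq_toFinset_card _ (Set.Finite.subset (List.finite_length_eq A m) (fun u hu => hu.1))]

/-- `u` is right special. -/
def RSpec (W : ℕ → A) (u : List A) : Prop :=
  ∃ c₁ c₂ : A, c₁ ≠ c₂ ∧ IsFactor W (u ++ [c₁]) ∧ IsFactor W (u ++ [c₂])

lemma dropLast_mem {m : ℕ} {w : List A} (hw : w ∈ Ffin W (m + 1)) :
    w.dropLast ∈ Ffin W m := by
  rw [mem_Ffin] at hw ⊢
  constructor
  · simp [hw.1]
  · rw [List.dropLast_eq_take]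
    exact hw.2.take _

lemma sum_fiber_eq (m : ℕ) :
    ∑ b ∈ Ffin W m, ((Ffin W (m+1)).filter (fun w => w.dropLast = b)).card
      = complexity W (m+1) := by
  rw [← card_Ffin]
  exact (Finset.card_eq_sum_card_fiberwise (fun w hw => dropLast_mem hw)).symm

lemma fiber_nonempty {m : ℕ} {b : List A} (hb : b ∈ Ffin W m) :
    1 ≤ ((Ffin W (m+1)).filter (fun w => w.dropLast = b)).card := by
  rw [mem_Ffin] at hb
  obtain ⟨hlen, i, hi⟩ := hb
  refine Finset.card_pos.2 ⟨b ++ [W (i + m)], ?_⟩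
  rw [Finset.mem_filter, mem_Ffin]
  refine ⟨⟨by simp [hlen], ?_⟩, by simp⟩
  have : b = factorAt W i m := by rw [occursAt, hlen] at hi; exact hi
  rw [this, ← factorAt_succ]
  exact isFactor_factorAt W i (m+1)

lemma two_le_fiber {m : ℕ} {u : List A} (hlen : u.length = m) (hu : RSpec W u) :
    2 ≤ ((Ffin W (m+1)).filter (fun w => w.dropLast = u)).card := by
  obtain ⟨c₁, c₂, hne, h₁, h₂⟩ := hu
  have hmem : ∀ c : A, IsFactor W (u ++ [c]) →
      u ++ [c] ∈ (Ffin W (m+1)).filter (fun w => w.dropLast = u) := by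
    intro c hc
    rw [Finset.mem_filter, mem_Ffin]
    exact ⟨⟨by simp [hlen], hc⟩, by simp⟩
  calc 2 = ({u ++ [c₁], u ++ [c₂]} : Finset (List A)).card := by
            rw [Finset.card_pair (by simp [hne])]
    _ ≤ _ := Finset.card_le_card (by
            intro x hx
            simp only [Finset.mem_insert, Finset.mem_singleton] at hx
            rcases hx with rfl | rfl
            exacts [hmem _ h₁, hmem _ h₂])

lemma card_le_sum {β : Type*} (T : Finset β) (g : β → ℕ) (h1 : ∀ b ∈ T, 1 ≤ g b) :
    T.card ≤ ∑ b ∈ T, g b := by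
  calc T.card = ∑ _b ∈ T, 1 := by simp
    _ ≤ _ := Finset.sum_le_sum h1

lemma sum_lb {β : Type*} [DecidableEq β] (T : Finset β) (g : β → ℕ)
    (h1 : ∀ b ∈ T, 1 ≤ g b) {b₁ b₂ : β} (hb₁ : b₁ ∈ T) (hb₂ : b₂ ∈ T) (hne : b₁ ≠ b₂)
    (g₁ : 2 ≤ g b₁) (g₂ : 2 ≤ g b₂) : T.card + 2 ≤ ∑ b ∈ T, g b := by
  have e1 : ∑ b ∈ T, g b = g b₁ + ∑ b ∈ T.erase b₁, g b :=
    (Finset.add_sum_erase T g hb₁).symm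
  have hb₂' : b₂ ∈ T.erase b₁ := Finset.mem_erase.2 ⟨hne.symm, hb₂⟩
  have e2 : ∑ b ∈ T.erase b₁, g b = g b₂ + ∑ b ∈ (T.erase b₁).erase b₂, g b :=
    (Finset.add_sum_erase _ g hb₂').symm
  have e3 : ((T.erase b₁).erase b₂).card ≤ ∑ b ∈ (T.erase b₁).erase b₂, g b :=
    card_le_sum _ _ (fun b hb => h1 b (Finset.mem_of_mem_erase (Finset.mem_of_mem_erase hb)))
  have c1 : (T.erase b₁).card = T.card - 1 := Finset.card_erase_of_mem hb₁
  have c2 : ((T.erase b₁).erase b₂).card = (T.erase b₁).card - 1 := Finset.card_erase_of_mem hb₂'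
  have hT : 2 ≤ T.card := by
    have := Finset.card_le_card (show ({b₁, b₂} : Finset β) ⊆ T by
      intro x hx; simp only [Finset.mem_insert, Finset.mem_singleton] at hx
      rcases hx with rfl | rfl <;> assumption)
    rwa [Finset.card_pair hne] at this
  omega

lemma sum_lb3 {β : Type*} [DecidableEq β] (T : Finset β) (g : β → ℕ)
    (h1 : ∀ b ∈ T, 1 ≤ g b) {b₁ : β} (hb₁ : b₁ ∈ T) (g₁ : 3 ≤ g b₁) :
    T.card + 2 ≤ ∑ b ∈ T, g b := by
  have e1 : ∑ b ∈ T, g b = g b₁ + ∑ b ∈ T.erase b₁, g b :=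
    (Finset.add_sum_erase T g hb₁).symm
  have e3 : (T.erase b₁).card ≤ ∑ b ∈ T.erase b₁, g b :=
    card_le_sum _ _ (fun b hb => h1 b (Finset.mem_of_mem_erase hb))
  have c1 : (T.erase b₁).card = T.card - 1 := Finset.card_erase_of_mem hb₁
  have hT : 1 ≤ T.card := Finset.card_pos.2 ⟨b₁, hb₁⟩
  omega

variable {N K : ℕ}

lemma unique_rspecial (h : ∀ n : ℕ, N ≤ n → complexity W n = n + K)
    {m : ℕ} (hm : N ≤ m) {u₁ u₂ : List A} (l₁ : u₁.length = m) (l₂ : u₂.length = m)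
    (h₁ : RSpec W u₁) (h₂ : RSpec W u₂) : u₁ = u₂ := by
  by_contra hne
  have hu₁ : u₁ ∈ Ffin W m := mem_Ffin.2 ⟨l₁, by
    obtain ⟨c, _, _, hc, _⟩ := h₁
    have := hc.take u₁.length; simpa using this⟩
  have hu₂ : u₂ ∈ Ffin W m := mem_Ffin.2 ⟨l₂, by
    obtain ⟨c, _, _, hc, _⟩ := h₂
    have := hc.take u₂.length; simpa using this⟩
  have key := sum_lb (Ffin W m) (fun b => ((Ffin W (m+1)).filter (fun w => w.dropLast = b)).card)
    (fun b hb => fiber_nonempty hb) hu₁ hu₂ hne (two_le_fiber l₁ h₁) (two_le_fiber l₂ h₂)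
  rw [sum_fiber_eq, card_Ffin, h m hm, h (m+1) (by omega)] at key
  omega

lemma ext_le_two (h : ∀ n : ℕ, N ≤ n → complexity W n = n + K)
    {m : ℕ} (hm : N ≤ m) {u : List A} (hlen : u.length = m) {c₁ c₂ c₃ : A}
    (h12 : c₁ ≠ c₂) (h13 : c₁ ≠ c₃) (h23 : c₂ ≠ c₃)
    (f₁ : IsFactor W (u ++ [c₁])) (f₂ : IsFactor W (u ++ [c₂])) (f₃ : IsFactor W (u ++ [c₃])) :
    False := by
  have hu : u ∈ Ffin W m := mem_Ffin.2 ⟨hlen, by have := f₁.take u.length; simpa using this⟩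
  have hmem : ∀ c : A, IsFactor W (u ++ [c]) →
      u ++ [c] ∈ (Ffin W (m+1)).filter (fun w => w.dropLast = u) := by
    intro c hc
    rw [Finset.mem_filter, mem_Ffin]
    exact ⟨⟨by simp [hlen], hc⟩, by simp⟩
  have h3 : 3 ≤ ((Ffin W (m+1)).filter (fun w => w.dropLast = u)).card := by
    calc 3 = ({u ++ [c₁], u ++ [c₂], u ++ [c₃]} : Finset (List A)).card := by
              rw [Finset.card_insert_of_notMem (by simp [h12, h13]),
                Finset.card_pair (by simp [h23])]
      _ ≤ _ := Finset.card_le_card (by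
              intro x hx
              simp only [Finset.mem_insert, Finset.mem_singleton] at hx
              rcases hx with rfl | rfl | rfl
              exacts [hmem _ f₁, hmem _ f₂, hmem _ f₃])
  have key := sum_lb3 (Ffin W m) (fun b => ((Ffin W (m+1)).filter (fun w => w.dropLast = b)).card)
    (fun b hb => fiber_nonempty hb) hu h3
  rw [sum_fiber_eq, card_Ffin, h m hm, h (m+1) (by omega)] at key
  omega


lemma exists_next (hrec : Recurrent W) {v : List A} (hv : IsFactor W v) (i : ℕ) :
    ∃ j, i < j ∧ occursAt W v j ∧ ∀ m, i < m → m < j → ¬ occursAt W v m := by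
  have hinf := hrec v hv
  have hex : ∃ j, i < j ∧ occursAt W v j := by
    by_contra hno
    push_neg at hno
    refine hinf (Set.Finite.subset (Set.finite_Iic i) (fun x hx => ?_))
    simp only [Set.mem_setOf_eq] at hx
    simp only [Set.mem_Iic]
    by_contra hxi
    exact hno x (by omega) hx
  classical
  obtain ⟨j, hj⟩ := hex
  have hwf : ∃ j, i < j ∧ occursAt W v j := ⟨j, hj⟩
  let j₀ := Nat.find hwf
  refine ⟨j₀, (Nat.find_spec hwf).1, (Nat.find_spec hwf).2, fun m him hmj hocc => ?_⟩
  exact Nat.find_min hwf hmj ⟨him, hocc⟩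

lemma returnWord_exists (hrec : Recurrent W) {v : List A} (hv : IsFactor W v) :
    ∃ u, IsReturnWord W v u := by
  obtain ⟨i, hi⟩ := hv
  obtain ⟨j, hij, hj, hmin⟩ := exists_next hrec ⟨i, hi⟩ i
  exact ⟨factorAt W i (j - i), i, j, hij, hi, hj, hmin, rfl⟩

lemma factorAt_eq_elem {a b p : ℕ} (h : factorAt W a p = factorAt W b p) {d : ℕ} (hd : d < p) :
    W (a + d) = W (b + d) := by
  have := congrArg (fun l => l[d]?) h
  simp only [getElem?_factorAt, if_pos hd] at this
  exact Option.some.inj this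

/-- If `v` has a unique return word then `W` is eventually periodic. -/
lemma periodic_of_unique_return (hrec : Recurrent W) {v r : List A} (hv : IsFactor W v)
    (huniq : ∀ u, IsReturnWord W v u → u = r) :
    ∃ i₀ p, 1 ≤ p ∧ ∀ q, i₀ ≤ q → W (q + p) = W q := by
  obtain ⟨i₀, hi₀⟩ := hv
  set p := r.length with hp
  have step : ∀ i, occursAt W v i → occursAt W v (i + p) ∧ factorAt W i p = r := by
    intro i hi
    obtain ⟨j, hij, hj, hmin⟩ := exists_next hrec ⟨i, hi⟩ i
    have hr : factorAt W i (j - i) = r := huniq _ ⟨i, j, hij, hi, hj, hmin, rfl⟩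
    have hlen : j - i = p := by
      have := length_factorAt W i (j - i)
      rw [hr] at this
      omega
    have hji : j = i + p := by omega
    exact ⟨hji ▸ hj, hlen ▸ hr⟩
  have hp1 : 1 ≤ p := by
    obtain ⟨j, hij, hj, hmin⟩ := exists_next hrec ⟨i₀, hi₀⟩ i₀
    have hr : factorAt W i₀ (j - i₀) = r := huniq _ ⟨i₀, j, hij, hi₀, hj, hmin, rfl⟩
    have := length_factorAt W i₀ (j - i₀)
    rw [hr] at this
    omega
  have occs : ∀ t, occursAt W v (i₀ + t * p) ∧ factorAt W (i₀ + t * p) p = r := by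
    intro t
    induction t with
    | zero => exact ⟨by simpa using hi₀, by simpa using (step i₀ hi₀).2⟩
    | succ t ih =>
      have := step _ (ih.1)
      have harr : i₀ + t * p + p = i₀ + (t + 1) * p := by ring
      rw [harr] at this
      exact ⟨this.1, (step _ this.1).2⟩
  refine ⟨i₀, p, hp1, fun q hq => ?_⟩
  obtain ⟨x, rfl⟩ : ∃ x, q = i₀ + x := ⟨q - i₀, by omega⟩
  set t := x / p with ht
  set s := x % p with hs
  have hx : x = t * p + s := by rw [ht, hs, Nat.mul_comm]; exact (Nat.div_add_mod x p).symm
  have hsp : s < p := Nat.mod_lt _ (by omega)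
  have e1 : factorAt W (i₀ + t * p) p = factorAt W (i₀ + (t+1) * p) p := by
    rw [(occs t).2, (occs (t+1)).2]
  have := factorAt_eq_elem e1.symm hsp
  have harr1 : i₀ + (t+1) * p + s = i₀ + x + p := by rw [hx]; ring
  have harr2 : i₀ + t * p + s = i₀ + x := by rw [hx]; ring
  rw [harr1, harr2] at this
  exact this

lemma complexity_le_of_periodic {i₀ p : ℕ} (hp : 1 ≤ p)
    (hper : ∀ q, i₀ ≤ q → W (q + p) = W q) (m : ℕ) : complexity W m ≤ i₀ + p := by
  have key : ∀ x, W (i₀ + x) = W (i₀ + x % p) := by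
    intro x
    induction x using Nat.strong_induction_on with
    | _ x ih =>
      by_cases hx : x < p
      · rw [Nat.mod_eq_of_lt hx]
      · have h1 : W (i₀ + x) = W (i₀ + (x - p)) := by
          have := hper (i₀ + (x - p)) (by omega)
          rw [show i₀ + (x - p) + p = i₀ + x by omega] at this
          exact this
        rw [h1, ih (x - p) (by omega),
          show (x - p) % p = x % p from (Nat.mod_eq_sub_mod (by omega)).symm]
  have himg : {u : List A | u.length = m ∧ IsFactor W u} ⊆
      (fun i => factorAt W i m) '' (Set.Iio (i₀ + p)) := by
    rintro u ⟨hlen, i, hi⟩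
    have hu : u = factorAt W i m := by rw [occursAt, hlen] at hi; exact hi
    by_cases hii : i < i₀
    · exact ⟨i, by simp only [Set.mem_Iio]; omega, hu.symm⟩
    · refine ⟨i₀ + (i - i₀) % p, by simp only [Set.mem_Iio]; have := Nat.mod_lt (i - i₀) (show 0 < p by omega); omega, ?_⟩
      rw [hu]
      apply factorAt_ext rfl
      intro t ht
      have e1 : W (i + t) = W (i₀ + ((i - i₀) + t)) := by
        congr 1; omega
      have e2 : i₀ + (i - i₀) % p + t = i₀ + ((i - i₀) % p + t) := by omega
      rw [e1, e2, key ((i - i₀) + t), key ((i - i₀) % p + t), Nat.mod_add_mod]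
  calc complexity W m ≤ ((fun i => factorAt W i m) '' (Set.Iio (i₀ + p))).ncard :=
        Set.ncard_le_ncard himg ((Set.finite_Iio _).image _)
    _ ≤ (Set.Iio (i₀ + p)).ncard := Set.ncard_image_le (Set.finite_Iio _)
    _ = i₀ + p := by
        rw [← Finset.coe_Iio, Set.ncard_coe_finset, Nat.card_Iio]

/-- there exist two distinct return words -/
lemma two_return_words {N K : ℕ} (hrec : Recurrent W)
    (h : ∀ n : ℕ, N ≤ n → complexity W n = n + K) {v : List A} (hv : IsFactor W v) :
    ∃ r₁ r₂, r₁ ≠ r₂ ∧ IsReturnWord W v r₁ ∧ IsReturnWord W v r₂ := by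
  obtain ⟨r, hr⟩ := returnWord_exists hrec hv
  by_contra hno
  push_neg at hno
  have huniq : ∀ u, IsReturnWord W v u → u = r := by
    intro u hu
    by_contra hne
    exact (hno u r hne hu) hr
  obtain ⟨i₀, p, hp, hper⟩ := periodic_of_unique_return hrec hv huniq
  have hb := complexity_le_of_periodic hp hper (max N (i₀ + p + 1))
  rw [h _ (le_max_left _ _)] at hb
  have := le_max_right N (i₀ + p + 1)
  omega


/-- A "complete return word" shape. -/
def GoodCR (W : ℕ → A) (v w : List A) : Prop :=
  (∃ i, w = factorAt W i w.length) ∧ w.take v.length = v ∧ v.length < w.length ∧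
  w.drop (w.length - v.length) = v ∧
  ∀ t, 0 < t → t < w.length - v.length → (w.drop t).take v.length ≠ v

lemma goodCR_of_return {v r : List A} (hr : IsReturnWord W v r) : GoodCR W v (r ++ v) := by
  obtain ⟨i, j, hij, hi, hj, hmin, hre⟩ := hr
  have hiv : v = factorAt W i v.length := hi
  have hjv : v = factorAt W j v.length := hj
  have hw : r ++ v = factorAt W i ((j - i) + v.length) := by
    rw [factorAt_append, ← hre]
    congr 1
    rw [show i + (j - i) = j from by omega]
    exact hjv
  have hwlen : (r ++ v).length = (j - i) + v.length := by rw [hw, length_factorAt]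
  refine ⟨⟨i, by rw [hwlen]; exact hw⟩, ?_, ?_, ?_, ?_⟩
  · rw [hw, take_factorAt (Nat.le_add_left _ _), ← hiv]
  · rw [hwlen]; omega
  · rw [hwlen, Nat.add_sub_cancel, hw, drop_factorAt,
      show i + (j - i) = j from by omega,
      show j - i + v.length - (j - i) = v.length from by omega]
    exact hjv.symm
  · intro t ht htlt heq
    rw [hwlen] at htlt
    rw [hw, drop_factorAt,
      take_factorAt (show v.length ≤ j - i + v.length - t from by omega)] at heq
    exact hmin (i + t) (by omega) (by omega)
      (show v = factorAt W (i + t) v.length from heq.symm)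

lemma goodCR_noPrefix {v w₁ w₂ : List A} (h₁ : GoodCR W v w₁) (h₂ : GoodCR W v w₂)
    (hne : w₁ ≠ w₂) : ¬ w₁ <+: w₂ := by
  intro hpre
  obtain ⟨_, _, hn₁, hsuf₁, _⟩ := h₁
  obtain ⟨_, _, hn₂, _, hNoInt₂⟩ := h₂
  have hlt : w₁.length < w₂.length := by
    rcases Nat.lt_or_ge w₁.length w₂.length with hh | hh
    · exact hh
    · exact absurd (hpre.eq_of_length (by have := hpre.length_le; omega)) hne
  have htake : w₁ = w₂.take w₁.length := List.prefix_iff_eq_take.1 hpre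
  refine hNoInt₂ (w₁.length - v.length) (by omega) (by omega) ?_
  have e1 : (w₂.take w₁.length).drop (w₁.length - v.length)
      = (w₂.drop (w₁.length - v.length)).take (w₁.length - (w₁.length - v.length)) :=
    List.drop_take
  rw [show w₁.length - (w₁.length - v.length) = v.length from by omega] at e1
  rw [← e1, ← htake, hsuf₁]

lemma goodCR_ext_factor {v w : List A} (hw : GoodCR W v w) {t : ℕ} (ht : t < w.length) :
    IsFactor W (w.take t ++ [w[t]]) := by
  obtain ⟨⟨i, hi⟩, _, _, _, _⟩ := hw
  have e : w.take t ++ [w[t]] = w.take (t + 1) := by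
    rw [List.take_succ, List.getElem?_eq_getElem ht]
    rfl
  have e2 : w.take (t + 1) = factorAt W i (t + 1) := by
    conv_lhs => rw [hi]
    rw [take_factorAt (by omega)]
  rw [e, e2]
  exact isFactor_factorAt W i (t + 1)

lemma diverge {v w₁ w₂ : List A} (h₁ : GoodCR W v w₁) (h₂ : GoodCR W v w₂) (hne : w₁ ≠ w₂) :
    ∃ d, v.length ≤ d ∧ d < w₁.length ∧ d < w₂.length ∧ w₁.take d = w₂.take d ∧
      w₁[d]? ≠ w₂[d]? := by
  classical
  have hP : ∃ t : ℕ, w₁[t]? ≠ w₂[t]? := by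
    by_contra hno
    push_neg at hno
    exact hne (List.ext_getElem? hno)
  set d := Nat.find hP with hd
  have hspec : w₁[d]? ≠ w₂[d]? := Nat.find_spec hP
  have hmin : ∀ t, t < d → w₁[t]? = w₂[t]? := by
    intro t ht
    have := Nat.find_min hP ht
    simpa using this
  have hd₁ : d < w₁.length := by
    by_contra hge
    push_neg at hge
    have heq : w₁ = w₂.take w₁.length := by
      apply List.ext_getElem?
      intro t
      rw [List.getElem?_take]
      by_cases htl : t < w₁.length
      · rw [if_pos htl]
        exact hmin t (by omega)
      · rw [if_neg htl, List.getElem?_eq_none (by omega)]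
    exact goodCR_noPrefix h₁ h₂ hne (heq ▸ List.take_prefix _ _)
  have hd₂ : d < w₂.length := by
    by_contra hge
    push_neg at hge
    have heq : w₂ = w₁.take w₂.length := by
      apply List.ext_getElem?
      intro t
      rw [List.getElem?_take]
      by_cases htl : t < w₂.length
      · rw [if_pos htl]
        exact (hmin t (by omega)).symm
      · rw [if_neg htl, List.getElem?_eq_none (by omega)]
    exact goodCR_noPrefix h₂ h₁ hne.symm (heq ▸ List.take_prefix _ _)
  have hnd : v.length ≤ d := by
    rw [hd, Nat.le_find_iff]
    intro t ht hne'
    apply hne'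
    obtain ⟨_, hv₁, hn₁, _, _⟩ := h₁
    obtain ⟨_, hv₂, hn₂, _, _⟩ := h₂
    have e₁ : w₁[t]? = v[t]? := by
      conv_rhs => rw [← hv₁]
      rw [List.getElem?_take, if_pos ht]
    have e₂ : w₂[t]? = v[t]? := by
      conv_rhs => rw [← hv₂]
      rw [List.getElem?_take, if_pos ht]
    rw [e₁, e₂]
  refine ⟨d, hnd, hd₁, hd₂, ?_, hspec⟩
  apply List.ext_getElem?
  intro t
  rw [List.getElem?_take, List.getElem?_take]
  by_cases htd : t < d
  · rw [if_pos htd, if_pos htd, hmin t htd]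
  · rw [if_neg htd, if_neg htd]

lemma cross [Fintype A] {N K : ℕ} (h : ∀ n : ℕ, N ≤ n → complexity W n = n + K)
    {v : List A} (hvN : N ≤ v.length) {u w' : List A} {d d' : ℕ}
    (hu : RSpec W u) (hulen : u.length = d) (huv : u.take v.length = v)
    (hnd : v.length ≤ d) (hdd : d < d')
    (hw' : GoodCR W v w') (hd'w : d' < w'.length) (hu' : RSpec W (w'.take d')) : False := by
  obtain ⟨c, c', hcc, f1, f2⟩ := hu'
  have hul : (w'.take d').length = d' := by rw [List.length_take]; omega
  have hzlen : ((w'.take d').drop (d' - d)).length = d := by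
    rw [List.length_drop, hul]; omega
  have hz : ∀ e : A, ((w'.take d') ++ [e]).drop (d' - d) = (w'.take d').drop (d' - d) ++ [e] := by
    intro e
    rw [List.drop_append, hul, show d' - d - d' = 0 from by omega]
    rfl
  have fz1 : IsFactor W ((w'.take d').drop (d' - d) ++ [c]) := by
    rw [← hz c]; exact f1.drop _
  have fz2 : IsFactor W ((w'.take d').drop (d' - d) ++ [c']) := by
    rw [← hz c']; exact f2.drop _
  have hzu : (w'.take d').drop (d' - d) = u :=
    unique_rspecial h (le_trans hvN hnd) hzlen hulen ⟨c, c', hcc, fz1, fz2⟩ hu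
  obtain ⟨_, _, _, _, hNoInt⟩ := hw'
  refine hNoInt (d' - d) (by omega) (by omega) ?_
  have e1 : (w'.take d').drop (d' - d) = (w'.drop (d' - d)).take d := by
    rw [List.drop_take, show d' - (d' - d) = d from by omega]
  have e2 : (w'.drop (d' - d)).take v.length
      = ((w'.drop (d' - d)).take d).take v.length := by
    rw [List.take_take, Nat.min_eq_left hnd]
  rw [e2, ← e1, hzu, huv]

lemma no_three [Fintype A] {N K : ℕ} (h : ∀ n : ℕ, N ≤ n → complexity W n = n + K)
    {v : List A} (hvN : N ≤ v.length) {w₁ w₂ w₃ : List A}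
    (h₁ : GoodCR W v w₁) (h₂ : GoodCR W v w₂) (h₃ : GoodCR W v w₃)
    (ne12 : w₁ ≠ w₂) (ne13 : w₁ ≠ w₃) (ne23 : w₂ ≠ w₃) : False := by
  obtain ⟨d₁₂, n12, a12, b12, t12, g12⟩ := diverge h₁ h₂ ne12
  obtain ⟨d₁₃, n13, a13, b13, t13, g13⟩ := diverge h₁ h₃ ne13
  obtain ⟨d₂₃, n23, a23, b23, t23, g23⟩ := diverge h₂ h₃ ne23
  have rspec : ∀ (x y : List A) (d : ℕ), GoodCR W v x → GoodCR W v y →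
      d < x.length → d < y.length → x.take d = y.take d → x[d]? ≠ y[d]? →
      RSpec W (x.take d) := by
    intro x y d hx hy hdx hdy ht hg
    refine ⟨x[d], y[d], ?_, goodCR_ext_factor hx hdx, ?_⟩
    · intro hcc
      apply hg
      rw [List.getElem?_eq_getElem hdx, List.getElem?_eq_getElem hdy, hcc]
    · rw [ht]; exact goodCR_ext_factor hy hdy
  have takev : ∀ (x : List A) (d : ℕ), GoodCR W v x → v.length ≤ d →
      (x.take d).take v.length = v := by
    intro x d hx hd
    rw [List.take_take, Nat.min_eq_left hd]
    exact hx.2.1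
  by_cases hcase : d₁₂ = d₁₃ ∧ d₁₂ = d₂₃
  · obtain ⟨e13, e23⟩ := hcase
    subst e13; subst e23
    have hgetne : ∀ (x y : List A) (hx : d₁₂ < x.length) (hy : d₁₂ < y.length),
        x[d₁₂]? ≠ y[d₁₂]? → x[d₁₂] ≠ y[d₁₂] := by
      intro x y hx hy hg hcc
      apply hg
      rw [List.getElem?_eq_getElem hx, List.getElem?_eq_getElem hy, hcc]
    refine ext_le_two h (le_trans hvN n12)
      (show (w₁.take d₁₂).length = d₁₂ from by rw [List.length_take]; omega)
      (hgetne w₁ w₂ a12 b12 g12) (hgetne w₁ w₃ a13 b13 g13) (hgetne w₂ w₃ a23 b23 g23)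
      (goodCR_ext_factor h₁ a12) ?_ ?_
    · rw [t12]; exact goodCR_ext_factor h₂ b12
    · rw [t13]; exact goodCR_ext_factor h₃ b13
  · have r12 : RSpec W (w₁.take d₁₂) := rspec w₁ w₂ d₁₂ h₁ h₂ a12 b12 t12 g12
    have r13 : RSpec W (w₁.take d₁₃) := rspec w₁ w₃ d₁₃ h₁ h₃ a13 b13 t13 g13
    have r23 : RSpec W (w₂.take d₂₃) := rspec w₂ w₃ d₂₃ h₂ h₃ a23 b23 t23 g23
    have l12 : (w₁.take d₁₂).length = d₁₂ := by rw [List.length_take]; omega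
    have l13 : (w₁.take d₁₃).length = d₁₃ := by rw [List.length_take]; omega
    have l23 : (w₂.take d₂₃).length = d₂₃ := by rw [List.length_take]; omega
    rcases Nat.lt_trichotomy d₁₂ d₁₃ with hlt | heq | hgt
    · exact cross h hvN r12 l12 (takev w₁ d₁₂ h₁ n12) n12 hlt h₁ a13 r13
    · rcases Nat.lt_trichotomy d₁₂ d₂₃ with hlt2 | heq2 | hgt2
      · exact cross h hvN r12 l12 (takev w₁ d₁₂ h₁ n12) n12 hlt2 h₂ a23 r23
      · exact hcase ⟨heq, heq2⟩
      · have r12' : RSpec W (w₂.take d₁₂) := rspec w₂ w₁ d₁₂ h₂ h₁ b12 a12 t12.symm (Ne.symm g12)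
        exact cross h hvN r23 l23 (takev w₂ d₂₃ h₂ n23) n23 hgt2 h₂ b12 r12'
    · have r13' : RSpec W (w₃.take d₁₃) := rspec w₃ w₁ d₁₃ h₃ h₁ b13 a13 t13.symm (Ne.symm g13)
      exact cross h hvN r13 l13 (takev w₁ d₁₃ h₁ n13) n13 hgt h₁ a12 r12


end Aux

/-- A recurrent word of eventual complexity `n + K` has, for all sufficiently
long factors, exactly two distinct return words. -/
theorem stmt18 {A : Type*} [Fintype A] (W : ℕ → A) (hrec : Recurrent W)
    (N K : ℕ) (h : ∀ n : ℕ, N ≤ n → complexity W n = n + K) :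
    ∃ k : ℕ, ∀ v : List A, IsFactor W v → k ≤ v.length →
      {u : List A | IsReturnWord W v u}.ncard = 2 := by
  classical
  refine ⟨N, fun v hv hlen => ?_⟩
  obtain ⟨r₁, r₂, hne, hr₁, hr₂⟩ := two_return_words hrec h hv
  have hno3 : ∀ r, IsReturnWord W v r → r = r₁ ∨ r = r₂ := by
    intro r hr
    by_contra hrr
    push_neg at hrr
    obtain ⟨hrr1, hrr2⟩ := hrr
    have inj : ∀ a b : List A, a ++ v = b ++ v → a = b := fun a b hab =>
      List.append_left_injective v hab
    exact no_three h hlen (goodCR_of_return hr) (goodCR_of_return hr₁)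
      (goodCR_of_return hr₂)
      (fun e => hrr1 (inj _ _ e)) (fun e => hrr2 (inj _ _ e))
      (fun e => hne (inj _ _ e))
  have hset : {u : List A | IsReturnWord W v u} = {r₁, r₂} := by
    ext r
    simp only [Set.mem_setOf_eq, Set.mem_insert_iff, Set.mem_singleton_iff]
    constructor
    · exact hno3 r
    · rintro (rfl | rfl)
      exacts [hr₁, hr₂]
  rw [hset, Set.ncard_pair hne]
end
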